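/- arXiv:1703.03203 — 3 statements merged into one kernel-verified Lean document; each statement's English description precedes it below -/
import Mathlib

section
/- Let F₂ : [-1, 1) → ℝ be a function that can be represented as F₂(x) = c₁(1-x)^{-1/2} + c₂(1-x)^{1/2} + F̃₂(x), where c₁ > 0, c₂ ∈ ℝ, and F̃₂ is continuously differentiable on [-1, 1]. Let δ ∈ (0, 1), c̄₁ > 0 and C > 0 be such that F₂′(x) ≤ (1/2)·c̄₁(1−x)^{-3/2} and F₂′(x) ≥ 0 for all x ∈ [1−δ, 1), and ∫_{-1}^{β} |F₂′(x)| dx ≤ F₂(β) + C for all β ∈ [1−δ, 1), and suppose moreover F₂(x) ≤ c̄₁(1−x)^{-1/2} for x ∈ [1−δ, 1). Then for every integer n ≥ 2/δ: |Σ_{k = -n}^{n-1} ∫_{k/n}^{(k+1)/n} ((k+1)/n − x) F₂′(x) dx| ≤ 2·c̄₁/√n + C/n. -/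
open MeasureTheory Set

/-- Estimate of Σ_{1,n} in the proof of Proposition 2: if
F₂(x) = c₁(1-x)^{-1/2} + c₂(1-x)^{1/2} + Ft(x) on [-1,1) with c₁ > 0 and Ft ∈ C¹[-1,1],
and δ ∈ (0,1), cmax > 0, C > 0 are such that on [1−δ, 1) one has
0 ≤ F₂′(x) ≤ (1/2)cmax(1−x)^{-3/2} and F₂(x) ≤ cmax(1−x)^{-1/2}, and
∫_{-1}^β |F₂′| ≤ F₂(β) + C for all β ∈ [1−δ, 1), then for every n ≥ 2/δ,
|Σ_{k=-n}^{n-1} ∫_{k/n}^{(k+1)/n} ((k+1)/n − x) F₂′(x) dx| ≤ 2cmax/√n + C/n. -/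
theorem sigma_one_estimate
    (F₂ F₂' Ft : ℝ → ℝ) (c₁ c₂ cmax C δ : ℝ) (hc₁ : 0 < c₁)
    (hFt : ContDiffOn ℝ 1 Ft (Set.Icc (-1 : ℝ) 1))
    (hrep : ∀ x ∈ Set.Ico (-1 : ℝ) 1,
      F₂ x = c₁ * (1 - x) ^ (-(1 : ℝ)/2) + c₂ * (1 - x) ^ ((1 : ℝ)/2) + Ft x)
    (hderiv : ∀ x ∈ Set.Ico (-1 : ℝ) 1, HasDerivWithinAt F₂ (F₂' x) (Set.Ico (-1 : ℝ) 1) x)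
    (hδ : δ ∈ Set.Ioo (0 : ℝ) 1) (hcmax : 0 < cmax) (hC : 0 < C)
    (hderiv_nonneg : ∀ x ∈ Set.Ico (1 - δ) (1 : ℝ), 0 ≤ F₂' x)
    (hderiv_up : ∀ x ∈ Set.Ico (1 - δ) (1 : ℝ), F₂' x ≤ (1/2) * cmax * (1 - x) ^ (-(3 : ℝ)/2))
    (hF₂_up : ∀ x ∈ Set.Ico (1 - δ) (1 : ℝ), F₂ x ≤ cmax * (1 - x) ^ (-(1 : ℝ)/2))
    (hBV : ∀ β ∈ Set.Ico (1 - δ) (1 : ℝ), (∫ x in (-1 : ℝ)..β, |F₂' x|) ≤ F₂ β + C)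
    (n : ℕ) (hn : 2/δ ≤ (n : ℝ)) :
    |∑ k ∈ Finset.Icc (-(n : ℤ)) ((n : ℤ) - 1),
        ∫ x in ((k : ℝ)/(n : ℝ))..(((k : ℝ) + 1)/(n : ℝ)),
          (((k : ℝ) + 1)/(n : ℝ) - x) * F₂' x|
      ≤ 2 * cmax / Real.sqrt n + C / (n : ℝ) := by
  obtain ⟨hδ0, hδ1⟩ := hδ
  -- numeric facts
  have hn2 : (2:ℝ) < (n:ℝ) := lt_of_lt_of_le ((lt_div_iff₀ hδ0).mpr (by linarith)) hn
  have hn0 : (0:ℝ) < (n:ℝ) := by linarith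
  have hnne : (n:ℝ) ≠ 0 := hn0.ne'
  have hn1 : 1 ≤ n := by
    have : (1:ℝ) ≤ (n:ℝ) := by linarith
    exact_mod_cast this
  have hnδ : (2:ℝ) ≤ (n:ℝ) * δ := by
    rw [div_le_iff₀ hδ0] at hn; linarith
  have hinvn : 1/(n:ℝ) < δ := by
    rw [div_lt_iff₀ hn0]; nlinarith
  have hinvn0 : (0:ℝ) < 1/(n:ℝ) := by positivity
  set β : ℝ := 1 - 1/(n:ℝ) with hβdef
  have hβδ : 1 - δ ≤ β := by rw [hβdef]; linarith
  have hβlt1 : β < 1 := by rw [hβdef]; linarith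
  have hβle1 : β ≤ 1 := hβlt1.le
  have h1β : 1 - β = 1/(n:ℝ) := by rw [hβdef]; ring
  -- the explicit derivative
  set Ft' : ℝ → ℝ := fun x => derivWithin Ft (Set.Icc (-1:ℝ) 1) x with hFt'def
  set g : ℝ → ℝ := fun x =>
    c₁ * ((1/2) * (1-x) ^ (-(3:ℝ)/2)) - c₂ * ((1/2) * (1-x) ^ (-(1:ℝ)/2)) + Ft' x with hgdef
  have hF₂'g : ∀ x ∈ Set.Ico (-1:ℝ) 1, F₂' x = g x := by
    intro x hx
    have h1x : 0 < 1 - x := by linarith [hx.2]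
    have hbase : HasDerivAt (fun y : ℝ => 1 - y) (-1) x := (hasDerivAt_id x).const_sub 1
    have hpow : ∀ p : ℝ, HasDerivAt (fun y : ℝ => (1 - y) ^ p) (p * (1-x) ^ (p-1) * (-1)) x :=
      fun p => (Real.hasDerivAt_rpow_const (p := p) (Or.inl h1x.ne')).comp x hbase
    have h1 : HasDerivAt (fun y : ℝ => c₁ * (1 - y) ^ (-(1:ℝ)/2))
        (c₁ * ((1/2) * (1-x) ^ (-(3:ℝ)/2))) x := by
      have := (hpow (-(1:ℝ)/2)).const_mul c₁
      refine this.congr_deriv ?_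
      have he : (-(1:ℝ)/2 - 1) = -(3:ℝ)/2 := by norm_num
      rw [← he]; ring
    have h2 : HasDerivAt (fun y : ℝ => c₂ * (1 - y) ^ ((1:ℝ)/2))
        (-(c₂ * ((1/2) * (1-x) ^ (-(1:ℝ)/2)))) x := by
      have := (hpow ((1:ℝ)/2)).const_mul c₂
      refine this.congr_deriv ?_
      have he : ((1:ℝ)/2 - 1) = -(1:ℝ)/2 := by norm_num
      rw [← he]; ring
    have hFtd : HasDerivWithinAt Ft (Ft' x) (Set.Ico (-1:ℝ) 1) x :=
      ((hFt.differentiableOn one_ne_zero x (Set.Ico_subset_Icc_self hx)).hasDerivWithinAt).mono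
        Set.Ico_subset_Icc_self
    have hform : HasDerivWithinAt
        (fun y => c₁ * (1 - y) ^ (-(1 : ℝ)/2) + c₂ * (1 - y) ^ ((1 : ℝ)/2) + Ft y)
        (g x) (Set.Ico (-1:ℝ) 1) x := (h1.add h2).hasDerivWithinAt.add hFtd
    have hgF : HasDerivWithinAt F₂ (g x) (Set.Ico (-1:ℝ) 1) x := hform.congr hrep (hrep x hx)
    have e1 := (hderiv x hx).derivWithin ((uniqueDiffOn_Ico (-1:ℝ) 1) x hx)
    have e2 := hgF.derivWithin ((uniqueDiffOn_Ico (-1:ℝ) 1) x hx)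
    rw [← e1, ← e2]
  -- continuity of F₂' on Ico (-1) 1
  have hFt'c : ContinuousOn Ft' (Set.Icc (-1:ℝ) 1) :=
    hFt.continuousOn_derivWithin (uniqueDiffOn_Icc (by norm_num)) le_rfl
  have hbc : ContinuousOn (fun x : ℝ => 1 - x) (Set.Ico (-1:ℝ) 1) :=
    continuousOn_const.sub continuousOn_id
  have hgc : ContinuousOn g (Set.Ico (-1:ℝ) 1) := by
    have hb1 : ContinuousOn (fun x : ℝ => (1-x) ^ (-(3:ℝ)/2)) (Set.Ico (-1:ℝ) 1) :=
      hbc.rpow_const (fun x hx => Or.inl ((by linarith [hx.2] : (0:ℝ) < 1 - x).ne'))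
    have hb2 : ContinuousOn (fun x : ℝ => (1-x) ^ (-(1:ℝ)/2)) (Set.Ico (-1:ℝ) 1) :=
      hbc.rpow_const (fun x hx => Or.inl ((by linarith [hx.2] : (0:ℝ) < 1 - x).ne'))
    exact ((continuousOn_const.mul (continuousOn_const.mul hb1)).sub
      (continuousOn_const.mul (continuousOn_const.mul hb2))).add
      (hFt'c.mono Set.Ico_subset_Icc_self)
  have hF₂'c : ContinuousOn F₂' (Set.Ico (-1:ℝ) 1) := hgc.congr hF₂'g
  -- integrability on compact subintervals
  have hii : ∀ p q : ℝ, -1 ≤ p → q < 1 → p ≤ q → IntervalIntegrable F₂' volume p q := by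
    intro p q hp hq hpq
    apply (hF₂'c.mono ?_).intervalIntegrable
    rw [Set.uIcc_of_le hpq]
    exact fun x hx => ⟨le_trans hp hx.1, lt_of_le_of_lt hx.2 hq⟩
  -- reindex the sum
  set a : ℕ → ℝ := fun i => (i:ℝ)/(n:ℝ) - 1 with ha_def
  have hIcc : Finset.Icc (-(n:ℤ)) ((n:ℤ)-1)
      = Finset.map ⟨fun i : ℕ => (i:ℤ) - (n:ℤ), show Function.Injective (fun i : ℕ => (i:ℤ) - (n:ℤ)) from fun i j h => by simpa using h⟩ (Finset.range (2*n)) := by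
    ext k
    simp only [Finset.mem_Icc, Finset.mem_map, Finset.mem_range, Function.Embedding.coeFn_mk]
    constructor
    · rintro ⟨h1, h2⟩; exact ⟨(k + n).toNat, by omega, by omega⟩
    · rintro ⟨i, hi, rfl⟩; omega
  rw [hIcc, Finset.sum_map]
  simp only [Function.Embedding.coeFn_mk]
  have hrw : ∀ i : ℕ,
      (∫ x in (((((i:ℤ) - (n:ℤ)) : ℤ) : ℝ))/(n:ℝ)..((((((i:ℤ) - (n:ℤ)) : ℤ) : ℝ)) + 1)/(n:ℝ),
        (((((((i:ℤ) - (n:ℤ)) : ℤ) : ℝ)) + 1)/(n:ℝ) - x) * F₂' x)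
      = ∫ x in a i..a (i+1), (a (i+1) - x) * F₂' x := by
    intro i
    have e1 : (((((i:ℤ) - (n:ℤ)) : ℤ) : ℝ))/(n:ℝ) = a i := by
      rw [ha_def]; push_cast; rw [sub_div, div_self hnne]
    have e2 : ((((((i:ℤ) - (n:ℤ)) : ℤ) : ℝ)) + 1)/(n:ℝ) = a (i+1) := by
      rw [ha_def]; push_cast; field_simp; ring
    rw [e1, e2]
  simp only [hrw]
  -- properties of a
  have ha_le : ∀ i : ℕ, a i ≤ a (i+1) := by
    intro i; rw [ha_def]; simp only
    push_cast
    gcongr <;> linarith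
  have ha_lb : ∀ i : ℕ, -1 ≤ a i := by
    intro i; rw [ha_def]; simp only
    have : (0:ℝ) ≤ (i:ℝ)/(n:ℝ) := by positivity
    linarith
  have ha_step : ∀ i : ℕ, a (i+1) - a i = 1/(n:ℝ) := by
    intro i; rw [ha_def]; push_cast; ring
  set m : ℕ := 2*n - 1 with hmdef
  have h2n : 2*n = m + 1 := by omega
  have ham : a m = β := by
    have hc : ((m:ℕ):ℝ) = 2*(n:ℝ) - 1 := by
      rw [hmdef]; push_cast [Nat.cast_sub (by omega : 1 ≤ 2*n)]; ring
    rw [ha_def]; simp only; rw [hc, hβdef]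
    field_simp
    ring
  have ham1 : a (m+1) = 1 := by
    rw [ha_def]; simp only
    rw [← h2n]; push_cast; field_simp
    ring
  have ha_ub : ∀ i : ℕ, i ≤ m → a i ≤ β := by
    intro i hi
    rw [← ham, ha_def]
    simp only
    gcongr <;> exact_mod_cast hi
  -- split off the last term
  rw [h2n, Finset.sum_range_succ]
  have habs := abs_add_le (∑ i ∈ Finset.range m, ∫ x in a i..a (i+1), (a (i+1) - x) * F₂' x)
    (∫ x in a m..a (m+1), (a (m+1) - x) * F₂' x)
  refine le_trans habs ?_
  -- bound for the main part
  have hiabs : ∀ i : ℕ, i < m → IntervalIntegrable (fun x => |F₂' x|) volume (a i) (a (i+1)) := by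
    intro i hi
    exact (hii (a i) (a (i+1)) (ha_lb i) (lt_of_le_of_lt (ha_ub (i+1) (by omega)) hβlt1)
      (ha_le i)).abs
  have hstep : ∀ i ∈ Finset.range m,
      |∫ x in a i..a (i+1), (a (i+1) - x) * F₂' x|
        ≤ (1/(n:ℝ)) * ∫ x in a i..a (i+1), |F₂' x| := by
    intro i hi
    rw [Finset.mem_range] at hi
    have hab := ha_le i
    have hub : a (i+1) ≤ β := ha_ub (i+1) (by omega)
    have hlt1 : a (i+1) < 1 := lt_of_le_of_lt hub hβlt1
    have hcsub : Set.uIcc (a i) (a (i+1)) ⊆ Set.Ico (-1:ℝ) 1 := by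
      rw [Set.uIcc_of_le hab]
      exact fun x hx => ⟨le_trans (ha_lb i) hx.1, lt_of_le_of_lt hx.2 hlt1⟩
    have hInt1 : IntervalIntegrable (fun x => |(a (i+1) - x) * F₂' x|) volume (a i) (a (i+1)) :=
      (((continuousOn_const.sub continuousOn_id).mul (hF₂'c.mono hcsub))).abs.intervalIntegrable
    have hInt2 : IntervalIntegrable (fun x => (1/(n:ℝ)) * |F₂' x|) volume (a i) (a (i+1)) :=
      (hiabs i hi).const_mul _
    calc |∫ x in a i..a (i+1), (a (i+1) - x) * F₂' x|
        ≤ ∫ x in a i..a (i+1), |(a (i+1) - x) * F₂' x| :=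
          intervalIntegral.abs_integral_le_integral_abs hab
      _ ≤ ∫ x in a i..a (i+1), (1/(n:ℝ)) * |F₂' x| := by
          apply intervalIntegral.integral_mono_on hab hInt1 hInt2
          intro x hx
          rw [Set.mem_Icc] at hx
          obtain ⟨hx1, hx2⟩ := hx
          rw [abs_mul]
          apply mul_le_mul_of_nonneg_right _ (abs_nonneg _)
          rw [abs_of_nonneg (by linarith : (0:ℝ) ≤ a (i+1) - x)]
          have h2 : a (i+1) - x ≤ a (i+1) - a i := sub_le_sub_left hx1 _
          rw [ha_step i] at h2
          exact h2
      _ = (1/(n:ℝ)) * ∫ x in a i..a (i+1), |F₂' x| := intervalIntegral.integral_const_mul _ _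
  have hsum_main : ∑ i ∈ Finset.range m, |∫ x in a i..a (i+1), (a (i+1) - x) * F₂' x|
      ≤ (1/(n:ℝ)) * ∫ x in (-1:ℝ)..β, |F₂' x| := by
    calc ∑ i ∈ Finset.range m, |∫ x in a i..a (i+1), (a (i+1) - x) * F₂' x|
        ≤ ∑ i ∈ Finset.range m, (1/(n:ℝ)) * ∫ x in a i..a (i+1), |F₂' x| :=
          Finset.sum_le_sum hstep
      _ = (1/(n:ℝ)) * ∑ i ∈ Finset.range m, ∫ x in a i..a (i+1), |F₂' x| := by
          rw [Finset.mul_sum]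
      _ = (1/(n:ℝ)) * ∫ x in (a 0)..(a m), |F₂' x| := by
          rw [intervalIntegral.sum_integral_adjacent_intervals hiabs]
      _ = (1/(n:ℝ)) * ∫ x in (-1:ℝ)..β, |F₂' x| := by
          rw [ham]
          norm_num [ha_def]
  -- the BV bound
  have hβmem : β ∈ Set.Ico (1-δ) (1:ℝ) := ⟨hβδ, hβlt1⟩
  have hrpowβ : (1 - β) ^ (-(1:ℝ)/2) = Real.sqrt n := by
    rw [h1β, Real.sqrt_eq_rpow, one_div, Real.inv_rpow hn0.le, ← Real.rpow_neg hn0.le]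
    norm_num
  have hBVval : (∫ x in (-1:ℝ)..β, |F₂' x|) ≤ cmax * Real.sqrt n + C := by
    refine le_trans (hBV β hβmem) ?_
    have := hF₂_up β hβmem
    rw [hrpowβ] at this
    linarith
  have hsqrt_pos : 0 < Real.sqrt n := Real.sqrt_pos.mpr hn0
  have hsq : Real.sqrt n * Real.sqrt n = (n:ℝ) := Real.mul_self_sqrt hn0.le
  have hmain_final : ∑ i ∈ Finset.range m, |∫ x in a i..a (i+1), (a (i+1) - x) * F₂' x|
      ≤ cmax / Real.sqrt n + C / (n:ℝ) := by
    refine le_trans hsum_main ?_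
    have h1 : (1/(n:ℝ)) * (∫ x in (-1:ℝ)..β, |F₂' x|) ≤ (1/(n:ℝ)) * (cmax * Real.sqrt n + C) := by
      apply mul_le_mul_of_nonneg_left hBVval (by positivity)
    refine le_trans h1 (le_of_eq ?_)
    have hsne : Real.sqrt n ≠ 0 := hsqrt_pos.ne'
    rw [mul_add]
    congr 1
    · calc (1/(n:ℝ)) * (cmax * Real.sqrt n) = cmax * Real.sqrt n / (n:ℝ) := by ring
        _ = cmax * Real.sqrt n / (Real.sqrt n * Real.sqrt n) := by rw [hsq]
        _ = cmax / Real.sqrt n := by rw [mul_div_mul_right _ _ hsne]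
    · ring
  -- last term bound
  have hlast : |∫ x in a m..a (m+1), (a (m+1) - x) * F₂' x| ≤ cmax / Real.sqrt n := by
    rw [ham, ham1]
    rw [intervalIntegral.integral_of_le hβle1]
    have hae1 : ∀ᵐ x ∂(volume.restrict (Set.Ioc β 1)), x ∈ Set.Ioc β 1 :=
      ae_restrict_mem measurableSet_Ioc
    have hae2 : ∀ᵐ x ∂(volume.restrict (Set.Ioc β 1)), x ≠ (1:ℝ) := by
      apply ae_restrict_of_ae
      rw [ae_iff]
      have : {x : ℝ | ¬ x ≠ 1} = {1} := by ext y; simp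
      rw [this]
      exact measure_singleton 1
    have hmemIco : ∀ x : ℝ, x ∈ Set.Ioc β 1 → x ≠ 1 → x ∈ Set.Ico (1-δ) (1:ℝ) := by
      intro x hx hx1
      exact ⟨by linarith [hx.1], lt_of_le_of_ne hx.2 hx1⟩
    have hnonneg : 0 ≤ᵐ[volume.restrict (Set.Ioc β 1)] fun x => (1 - x) * F₂' x := by
      filter_upwards [hae1, hae2] with x hx hx1
      have hxI := hmemIco x hx hx1
      exact mul_nonneg (by linarith [hxI.2]) (hderiv_nonneg x hxI)
    have hle : (fun x => (1 - x) * F₂' x)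
        ≤ᵐ[volume.restrict (Set.Ioc β 1)] fun x => 1/2 * cmax * (1-x) ^ (-(1:ℝ)/2) := by
      filter_upwards [hae1, hae2] with x hx hx1
      have hxI := hmemIco x hx hx1
      have h1x : 0 < 1 - x := by linarith [hxI.2]
      calc (1 - x) * F₂' x ≤ (1 - x) * ((1/2) * cmax * (1-x) ^ (-(3:ℝ)/2)) :=
            mul_le_mul_of_nonneg_left (hderiv_up x hxI) h1x.le
        _ = 1/2 * cmax * (1-x) ^ (-(1:ℝ)/2) := by
            rw [show (-(1:ℝ)/2) = 1 + (-(3:ℝ)/2) by norm_num, Real.rpow_add h1x, Real.rpow_one]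
            ring
    have hDii : IntervalIntegrable (fun x : ℝ => 1/2 * cmax * (1-x) ^ (-(1:ℝ)/2)) volume β 1 := by
      have h0 : IntervalIntegrable (fun u : ℝ => u ^ (-(1:ℝ)/2)) volume (1 - β) (1 - 1) :=
        intervalIntegral.intervalIntegrable_rpow' (by norm_num)
      have h1 := h0.comp_sub_left 1
      simp only [sub_sub_cancel] at h1
      exact h1.const_mul _
    have hDint : Integrable (fun x : ℝ => 1/2 * cmax * (1-x) ^ (-(1:ℝ)/2))
        (volume.restrict (Set.Ioc β 1)) := hDii.1
    have hlb : 0 ≤ ∫ x in Set.Ioc β 1, (1 - x) * F₂' x := integral_nonneg_of_ae hnonneg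
    rw [abs_of_nonneg hlb]
    refine le_trans (integral_mono_of_nonneg hnonneg hDint hle) ?_
    rw [← intervalIntegral.integral_of_le hβle1, intervalIntegral.integral_const_mul]
    have hcomp := intervalIntegral.integral_comp_sub_left (a := β) (b := 1)
      (fun u : ℝ => u ^ (-(1:ℝ)/2)) 1
    rw [hcomp, sub_self, h1β, integral_rpow (Or.inl (by norm_num)),
      show (-(1:ℝ)/2 + 1) = 1/2 by norm_num,
      Real.zero_rpow (by norm_num : (1:ℝ)/2 ≠ 0), sub_zero]
    have hval : ((1:ℝ)/(n:ℝ)) ^ ((1:ℝ)/2) = 1 / Real.sqrt n := by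
      rw [one_div, Real.inv_rpow hn0.le, ← Real.sqrt_eq_rpow, one_div]
    rw [hval]
    have hsne : Real.sqrt n ≠ 0 := hsqrt_pos.ne'
    apply le_of_eq
    field_simp
  have h1 := (Finset.abs_sum_le_sum_abs
    (fun i => ∫ x in a i..a (i+1), (a (i+1) - x) * F₂' x) (Finset.range m)).trans hmain_final
  have h2 := add_le_add h1 hlast
  refine le_trans h2 (le_of_eq ?_)
  ring
end

section
/- Let F : [-1, 1) → ℝ be differentiable with derivative F′, let c > 0 and δ ∈ (0, 1) be such that F′(x) ≥ (1/2)·c·(1−x)^{-3/2} for all x ∈ [1−δ, 1). Then for every integer n ≥ 2/δ: ∫_{1−2/n}^{1−1/n} (1 − 1/n − x) F′(x) dx + ∫_{1−1/n}^{1} (1−x) F′(x) dx ≥ ((3√2 − 2)/2) · c / √n. -/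
open MeasureTheory Set

set_option maxHeartbeats 1000000 in
/-- Estimate of Σ_{3,n} (last two terms) in the proof of Proposition 2: if F is differentiable
on [-1,1) with derivative F′ satisfying F′(x) ≥ (1/2)c(1−x)^{-3/2} on [1−δ, 1) for some c > 0
and δ ∈ (0,1), then for every n ≥ 2/δ,
∫_{1−2/n}^{1−1/n} (1−1/n−x) F′(x) dx + ∫_{1−1/n}^{1} (1−x) F′(x) dx ≥ ((3√2−2)/2)·c/√n.
The (possibly infinite) improper integrals are formalized as lower Lebesgue integrals of the
nonnegative integrands. -/
theorem sigma_three_lower_estimate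
    (F F' : ℝ → ℝ) (c δ : ℝ) (hc : 0 < c) (hδ : δ ∈ Set.Ioo (0 : ℝ) 1)
    (hderiv : ∀ x ∈ Set.Ico (-1 : ℝ) 1, HasDerivWithinAt F (F' x) (Set.Ico (-1 : ℝ) 1) x)
    (hlow : ∀ x ∈ Set.Ico (1 - δ) (1 : ℝ), (1/2) * c * (1 - x) ^ (-(3 : ℝ)/2) ≤ F' x)
    (n : ℕ) (hn : 2/δ ≤ (n : ℝ)) :
    ENNReal.ofReal ((3 * Real.sqrt 2 - 2) / 2 * c / Real.sqrt n) ≤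
      (∫⁻ x in Set.Ioc (1 - 2/(n : ℝ)) (1 - 1/(n : ℝ)),
        ENNReal.ofReal ((1 - 1/(n : ℝ) - x) * F' x)) +
      ∫⁻ x in Set.Ioc (1 - 1/(n : ℝ)) (1 : ℝ), ENNReal.ofReal ((1 - x) * F' x) := by
  obtain ⟨hδ0, hδ1⟩ := hδ
  have hN2 : (2:ℝ) ≤ (n:ℝ) := le_trans (by rw [le_div_iff₀ hδ0]; linarith) hn
  set N : ℝ := (n : ℝ) with hNdef
  have hN0 : (0:ℝ) < N := by linarith
  have h2N : 2 / N ≤ δ := by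
    rw [div_le_iff₀ hN0]
    have h := (div_le_iff₀ hδ0).mp hn
    linarith
  have hab : 1 - 2/N ≤ 1 - 1/N := by
    have : 1/N ≤ 2/N := by apply div_le_div_of_nonneg_right <;> linarith
    linarith
  have hb1 : 1 - 1/N < 1 := by
    have : 0 < 1/N := by positivity
    linarith
  -- abbreviations
  set s : ℝ := Real.sqrt N with hsdef
  set t : ℝ := Real.sqrt 2 with htdef
  have hs0 : 0 < s := Real.sqrt_pos.mpr hN0
  have ht0 : 0 < t := Real.sqrt_pos.mpr (by norm_num)
  have hss : s * s = N := Real.mul_self_sqrt hN0.le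
  have htt : t * t = 2 := Real.mul_self_sqrt (by norm_num)
  -- rpow values at endpoints
  have e1 : ((1:ℝ)/N) ^ ((1:ℝ)/2) = 1/s := by
    rw [← Real.sqrt_eq_rpow, Real.sqrt_div' 1 hN0.le]
    simp [hsdef]
  have e2 : ((1:ℝ)/N) ^ (-(1:ℝ)/2) = s := by
    rw [show (-(1:ℝ)/2) = -((1:ℝ)/2) by norm_num, Real.rpow_neg (by positivity), e1]
    field_simp
  have e3 : ((2:ℝ)/N) ^ ((1:ℝ)/2) = t/s := by
    rw [← Real.sqrt_eq_rpow, Real.sqrt_div (by norm_num) N]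
  have e4 : ((2:ℝ)/N) ^ (-(1:ℝ)/2) = s * t / 2 := by
    rw [show (-(1:ℝ)/2) = -((1:ℝ)/2) by norm_num, Real.rpow_neg (by positivity), e3]
    rw [inv_div, div_eq_div_iff ht0.ne' (by norm_num : (2:ℝ) ≠ 0)]
    linear_combination (-s) * htt
  -- derivative of (1 - y)^p
  have hder : ∀ (p x : ℝ), x < 1 → HasDerivAt (fun y => (1 - y) ^ p) (-(p * (1 - x) ^ (p - 1))) x := by
    intro p x hx
    have h1 : HasDerivAt (fun y : ℝ => 1 - y) (-1) x := (hasDerivAt_id x).const_sub 1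
    have h2 := (Real.hasDerivAt_rpow_const (x := 1 - x) (p := p)
      (Or.inl (ne_of_gt (by linarith)))).comp x h1
    exact h2.congr_deriv (by ring)
  -- the comparison functions
  set g1 : ℝ → ℝ := fun x => (1 - 1/N - x) * ((1/2) * c * (1 - x) ^ (-(3:ℝ)/2)) with hg1
  set g2 : ℝ → ℝ := fun x => (1/2) * c * (1 - x) ^ (-(1:ℝ)/2) with hg2
  -- integrability
  have hint1 : IntervalIntegrable g1 volume (1 - 2/N) (1 - 1/N) := by
    apply ContinuousOn.intervalIntegrable
    apply ContinuousOn.mul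
    · exact (continuous_const.sub continuous_id).continuousOn
    · apply ContinuousOn.mul continuousOn_const
      apply ContinuousOn.rpow_const (continuous_const.sub continuous_id).continuousOn
      intro x hx
      rw [uIcc_of_le hab] at hx
      left
      have : x ≤ 1 - 1/N := hx.2
      have h1N : (0:ℝ) < 1/N := by positivity
      intro h; simp at h; linarith
  have hint2 : IntervalIntegrable g2 volume (1 - 1/N) 1 := by
    have h := (intervalIntegral.intervalIntegrable_rpow'
      (a := 0) (b := 1/N) (r := -(1:ℝ)/2) (by norm_num)).comp_sub_left 1
    simp only [sub_zero] at h
    exact (h.symm.const_mul ((1/2) * c))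
  -- value of the first integral
  have hI1 : ∫ x in (1 - 2/N)..(1 - 1/N), g1 x = (3 * t - 4) / 2 * c / s := by
    have hftc := intervalIntegral.integral_eq_sub_of_hasDerivAt
      (f := fun x => -c * (1 - x) ^ ((1:ℝ)/2) - (c/N) * (1 - x) ^ (-(1:ℝ)/2))
      (f' := g1) (a := 1 - 2/N) (b := 1 - 1/N) ?_ hint1
    · rw [hftc]
      beta_reduce
      have ha : 1 - (1 - 1/N) = 1/N := by ring
      have hb : 1 - (1 - 2/N) = 2/N := by ring
      rw [ha, hb, e1, e2, e3, e4, ← hss]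
      field_simp
      ring
    · intro x hx
      rw [uIcc_of_le hab] at hx
      have hx1 : x < 1 := lt_of_le_of_lt hx.2 hb1
      have hpos : (0:ℝ) < 1 - x := by linarith
      have d1 := (hder ((1:ℝ)/2) x hx1).const_mul (-c)
      have d2 := (hder (-(1:ℝ)/2) x hx1).const_mul (c/N)
      have d := d1.sub d2
      refine d.congr_deriv ?_
      have f1 : (1 - x) ^ ((1:ℝ)/2 - 1) = (1 - x) ^ (-(1:ℝ)/2) := by norm_num
      have f2 : (1 - x) ^ (-(1:ℝ)/2 - 1) = (1 - x) ^ (-(3:ℝ)/2) := by norm_num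
      have f3 : (1 - x) ^ (-(1:ℝ)/2) = (1 - x) * (1 - x) ^ (-(3:ℝ)/2) := by
        rw [show (-(1:ℝ)/2) = 1 + (-(3:ℝ)/2) by norm_num, Real.rpow_add hpos, Real.rpow_one]
      rw [hg1]
      simp only [f1, f2, f3]
      ring
  -- value of the second integral
  have hI2 : ∫ x in (1 - 1/N)..1, g2 x = c / s := by
    have hftc := intervalIntegral.integral_eq_sub_of_hasDerivAt_of_le
      (f := fun x => -c * (1 - x) ^ ((1:ℝ)/2)) (f' := g2) hb1.le ?_ ?_ hint2
    · rw [hftc]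
      beta_reduce
      have ha : 1 - (1 - 1/N) = 1/N := by ring
      rw [ha, sub_self, e1, Real.zero_rpow (by norm_num)]
      field_simp
      ring
    · apply Continuous.continuousOn
      exact continuous_const.mul ((continuous_const.sub continuous_id).rpow_const
        fun x => Or.inr (by norm_num))
    · intro x hx
      have hx1 : x < 1 := hx.2
      have hpos : (0:ℝ) < 1 - x := by linarith
      have d1 := (hder ((1:ℝ)/2) x hx1).const_mul (-c)
      refine d1.congr_deriv ?_
      have f1 : (1 - x) ^ ((1:ℝ)/2 - 1) = (1 - x) ^ (-(1:ℝ)/2) := by norm_num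
      rw [hg2]
      simp only [f1]
      ring
  -- first lintegral lower bound
  have hmono1 : ENNReal.ofReal ((3 * t - 4) / 2 * c / s) ≤
      ∫⁻ x in Set.Ioc (1 - 2/N) (1 - 1/N), ENNReal.ofReal ((1 - 1/N - x) * F' x) := by
    have hnn : 0 ≤ᵐ[volume.restrict (Set.Ioc (1 - 2/N) (1 - 1/N))] g1 := by
      refine (ae_restrict_iff' measurableSet_Ioc).mpr (ae_of_all _ fun x hx => ?_)
      have hx1 : x ≤ 1 - 1/N := hx.2
      exact mul_nonneg (by linarith)
        (mul_nonneg (by positivity) (Real.rpow_nonneg (by linarith [hb1]) _))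
    calc ENNReal.ofReal ((3 * t - 4) / 2 * c / s)
        = ENNReal.ofReal (∫ x in Set.Ioc (1 - 2/N) (1 - 1/N), g1 x) := by
          rw [← intervalIntegral.integral_of_le hab, hI1]
      _ = ∫⁻ x in Set.Ioc (1 - 2/N) (1 - 1/N), ENNReal.ofReal (g1 x) :=
          ofReal_integral_eq_lintegral_ofReal hint1.1 hnn
      _ ≤ _ := by
          apply setLIntegral_mono' measurableSet_Ioc
          intro x hx
          apply ENNReal.ofReal_le_ofReal
          have hxm : x ∈ Set.Ico (1 - δ) (1:ℝ) := by
            constructor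
            · have := hx.1; linarith
            · exact lt_of_le_of_lt hx.2 hb1
          exact mul_le_mul_of_nonneg_left (hlow x hxm) (by linarith [hx.2])
  -- second lintegral lower bound
  have hmono2 : ENNReal.ofReal (c / s) ≤
      ∫⁻ x in Set.Ioc (1 - 1/N) 1, ENNReal.ofReal ((1 - x) * F' x) := by
    have hnn : 0 ≤ᵐ[volume.restrict (Set.Ioc (1 - 1/N) 1)] g2 := by
      refine (ae_restrict_iff' measurableSet_Ioc).mpr (ae_of_all _ fun x hx => ?_)
      exact mul_nonneg (by positivity) (Real.rpow_nonneg (by linarith [hx.2]) _)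
    calc ENNReal.ofReal (c / s)
        = ENNReal.ofReal (∫ x in Set.Ioc (1 - 1/N) 1, g2 x) := by
          rw [← intervalIntegral.integral_of_le hb1.le, hI2]
      _ = ∫⁻ x in Set.Ioc (1 - 1/N) 1, ENNReal.ofReal (g2 x) :=
          ofReal_integral_eq_lintegral_ofReal hint2.1 hnn
      _ ≤ _ := by
          apply setLIntegral_mono' measurableSet_Ioc
          intro x hx
          apply ENNReal.ofReal_le_ofReal
          rcases eq_or_lt_of_le hx.2 with h1 | h1
          · rw [hg2]
            simp only [h1, sub_self, Real.zero_rpow (by norm_num : (-(1:ℝ)/2) ≠ 0)]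
            simp
          · have hxm : x ∈ Set.Ico (1 - δ) (1:ℝ) := by
              constructor
              · have h2 := hx.1
                have h1N : 1/N ≤ 2/N := by apply div_le_div_of_nonneg_right <;> linarith
                linarith
              · exact h1
            have hpos : (0:ℝ) < 1 - x := by linarith
            have f3 : g2 x = (1 - x) * ((1/2) * c * (1 - x) ^ (-(3:ℝ)/2)) := by
              show (1:ℝ)/2 * c * (1 - x) ^ (-(1:ℝ)/2) = _
              rw [show (-(1:ℝ)/2) = 1 + (-(3:ℝ)/2) by norm_num, Real.rpow_add hpos, Real.rpow_one]
              ring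
            rw [f3]
            exact mul_le_mul_of_nonneg_left (hlow x hxm) (by linarith)
  -- combine
  have h34 : (0:ℝ) ≤ (3 * t - 4) / 2 * c / s := by
    have ht4 : (0:ℝ) ≤ (3 * t - 4) / 2 := by nlinarith
    exact div_nonneg (mul_nonneg ht4 hc.le) hs0.le
  calc ENNReal.ofReal ((3 * t - 2) / 2 * c / s)
      ≤ ENNReal.ofReal ((3 * t - 4) / 2 * c / s) + ENNReal.ofReal (c / s) := by
        rw [← ENNReal.ofReal_add h34 (by positivity)]
        apply ENNReal.ofReal_le_ofReal
        ring_nf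
        linarith
    _ ≤ _ := add_le_add hmono1 hmono2
end

section
/- Let F₂ : [-1, 1) → ℝ be differentiable with derivative F₂′ integrable on [-1, β] for every β < 1, let δ ∈ (0, 1) and C > 0 be such that ∫_{-1}^{β} |F₂′(x)| dx ≤ F₂(β) + C for all β ∈ [1−δ, 1). Then for every integer n ≥ 2/δ, setting k₀ := ⌊(1−δ)n⌋, the quantity Σ_{2,n} := Σ_{k = -n}^{k₀ - 1} ∫_{k/n}^{(k+1)/n} ((k+1)/n − x) F₂′(x) dx + ∫_{k₀/n}^{1−δ} ((k₀+1)/n − x) F₂′(x) dx satisfies Σ_{2,n} ≥ −(1/n)(F₂(1−δ) + C). -/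
open MeasureTheory Set

/-- Estimate (eqSigma2IA) of Σ_{2,n} in the proof of Proposition 2: if F₂ is differentiable
on [-1,1) with derivative F₂′ integrable on [-1, β] for every β < 1, and δ ∈ (0,1), C > 0
are such that ∫_{-1}^β |F₂′| ≤ F₂(β) + C for all β ∈ [1−δ, 1), then for every n ≥ 2/δ,
with k₀ = ⌊(1−δ)n⌋,
Σ_{k=-n}^{k₀-1} ∫_{k/n}^{(k+1)/n} ((k+1)/n − x) F₂′(x) dx
  + ∫_{k₀/n}^{1−δ} ((k₀+1)/n − x) F₂′(x) dx ≥ −(1/n)(F₂(1−δ) + C). -/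
theorem sigma_two_lower_estimate
    (F₂ F₂' : ℝ → ℝ) (δ C : ℝ) (hδ : δ ∈ Set.Ioo (0 : ℝ) 1) (hC : 0 < C)
    (hderiv : ∀ x ∈ Set.Ico (-1 : ℝ) 1, HasDerivWithinAt F₂ (F₂' x) (Set.Ico (-1 : ℝ) 1) x)
    (hint : ∀ β : ℝ, β < 1 → IntervalIntegrable F₂' MeasureTheory.volume (-1) β)
    (hBV : ∀ β ∈ Set.Ico (1 - δ) (1 : ℝ), (∫ x in (-1 : ℝ)..β, |F₂' x|) ≤ F₂ β + C)
    (n : ℕ) (hn : 2/δ ≤ (n : ℝ)) :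
    -(1/(n : ℝ)) * (F₂ (1 - δ) + C) ≤
      (∑ k ∈ Finset.Icc (-(n : ℤ)) (⌊(1 - δ) * (n : ℝ)⌋ - 1),
        ∫ x in ((k : ℝ)/(n : ℝ))..(((k : ℝ) + 1)/(n : ℝ)),
          (((k : ℝ) + 1)/(n : ℝ) - x) * F₂' x) +
      ∫ x in ((⌊(1 - δ) * (n : ℝ)⌋ : ℝ)/(n : ℝ))..(1 - δ),
        (((⌊(1 - δ) * (n : ℝ)⌋ : ℝ) + 1)/(n : ℝ) - x) * F₂' x := by
  obtain ⟨hδ0, hδ1⟩ := hδ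
  have hn0 : (0:ℝ) < n := lt_of_lt_of_le (by positivity) hn
  set K : ℤ := ⌊(1 - δ) * (n : ℝ)⌋ with hKdef
  have hK0 : 0 ≤ K := Int.floor_nonneg.mpr (by nlinarith)
  have hKle : (K:ℝ) ≤ (1-δ)*n := Int.floor_le _
  have hKlt : (1-δ)*(n:ℝ) < (K:ℝ)+1 := Int.lt_floor_add_one _
  have hKn : (K:ℝ)/n ≤ 1-δ := by rw [div_le_iff₀ hn0]; linarith
  have h1δ : 1-δ ≤ ((K:ℝ)+1)/n := by rw [le_div_iff₀ hn0]; linarith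
  have hK0' : (0:ℝ) ≤ (K:ℝ) := by exact_mod_cast hK0
  have hIsub : ∀ a b : ℝ, -1 ≤ a → a ≤ b → b ≤ 1-δ →
      IntervalIntegrable F₂' volume a b := by
    intro a b ha hab hb
    refine (hint (1-δ) (by linarith)).mono_set ?_
    rw [uIcc_of_le hab, uIcc_of_le (by linarith : (-1:ℝ) ≤ 1-δ)]
    exact Icc_subset_Icc ha hb
  have step : ∀ a b c : ℝ, -1 ≤ a → a ≤ b → b ≤ 1-δ → b ≤ c → c ≤ a + 1/n →
      -((1/(n:ℝ)) * ∫ x in a..b, |F₂' x|) ≤ ∫ x in a..b, (c - x) * F₂' x := by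
    intro a b c ha hab hb hbc hca
    have hf := hIsub a b ha hab hb
    have h1 : IntervalIntegrable (fun x => -((1/(n:ℝ)) * |F₂' x|)) volume a b :=
      (hf.abs.const_mul _).neg
    have h2 : IntervalIntegrable (fun x => (c - x) * F₂' x) volume a b :=
      hf.continuousOn_mul (by fun_prop)
    have hmono := intervalIntegral.integral_mono_on hab h1 h2 (fun x hx => by
      have hx1 : a ≤ x := hx.1
      have hx2 : x ≤ b := hx.2
      have hw0 : 0 ≤ c - x := by linarith
      have hw1 : c - x ≤ 1/(n:ℝ) := by linarith
      have habs : |(c - x) * F₂' x| ≤ (1/(n:ℝ)) * |F₂' x| := by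
        rw [abs_mul, abs_of_nonneg hw0]
        exact mul_le_mul_of_nonneg_right hw1 (abs_nonneg _)
      have hneg := neg_abs_le ((c - x) * F₂' x)
      linarith)
    rw [intervalIntegral.integral_neg, intervalIntegral.integral_const_mul] at hmono
    exact hmono
  -- per-term bound on the sum
  have hk_bound : ∀ k ∈ Finset.Icc (-(n:ℤ)) (K-1),
      -((1/(n:ℝ)) * ∫ x in ((k:ℝ)/(n:ℝ))..(((k:ℝ)+1)/(n:ℝ)), |F₂' x|) ≤
      ∫ x in ((k:ℝ)/(n:ℝ))..(((k:ℝ)+1)/(n:ℝ)), (((k:ℝ)+1)/(n:ℝ) - x) * F₂' x := by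
    intro k hk
    rw [Finset.mem_Icc] at hk
    have hk1 : -(n:ℝ) ≤ (k:ℝ) := by exact_mod_cast hk.1
    have hk2 : (k:ℝ) + 1 ≤ (K:ℝ) := by
      have : (k:ℝ) ≤ (K:ℝ) - 1 := by exact_mod_cast hk.2; 
      linarith
    have h1 : -1 ≤ (k:ℝ)/n := by rw [le_div_iff₀ hn0]; linarith
    have h2 : (k:ℝ)/n ≤ ((k:ℝ)+1)/n := by
      gcongr <;> linarith
    have h3 : ((k:ℝ)+1)/n ≤ 1-δ := by rw [div_le_iff₀ hn0]; linarith
    exact step _ _ _ h1 h2 h3 le_rfl (by field_simp; exact le_rfl)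
  have hsum := Finset.sum_le_sum hk_bound
  have hlast := step ((K:ℝ)/n) (1-δ) (((K:ℝ)+1)/n)
    (by linarith [div_nonneg hK0' (le_of_lt hn0)]) hKn le_rfl h1δ
    (by rw [add_div])
  -- telescoping of the |F₂'| integrals
  have hn1 : 0 < n := by exact_mod_cast hn0
  set N : ℕ := (K + n).toNat with hNdef
  have hNcast : ((N:ℤ)) = K + n := Int.toNat_of_nonneg (by omega)
  set a : ℕ → ℝ := fun i => (-(n:ℝ) + i)/n with hadef
  have haord : ∀ i : ℕ, i ≤ N → -1 ≤ a i ∧ a i ≤ 1 - δ := by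
    intro i hi
    have hiK : (i:ℝ) ≤ (K:ℝ) + n := by
      have : (i:ℤ) ≤ K + n := by omega
      exact_mod_cast this
    constructor
    · rw [hadef]; rw [le_div_iff₀ hn0]
      have hi0 : (0:ℝ) ≤ (i:ℝ) := Nat.cast_nonneg i
      linarith
    · rw [hadef, div_le_iff₀ hn0]; linarith
  have hadj : ∀ i, i < N → IntervalIntegrable (fun x => |F₂' x|) volume (a i) (a (i+1)) := by
    intro i hi
    have h1 := haord i (le_of_lt hi)
    have h2 := haord (i+1) hi
    refine (hIsub _ _ h1.1 ?_ h2.2).abs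
    simp only [hadef]
    gcongr
    push_cast; linarith
  have htel := intervalIntegral.sum_integral_adjacent_intervals hadj
  have ha0 : a 0 = -1 := by rw [hadef]; field_simp; simp
  have haN : a N = (K:ℝ)/n := by
    have hNr : ((N:ℝ)) = (K:ℝ) + n := by exact_mod_cast hNcast
    simp only [hadef]
    rw [hNr]; ring
  rw [ha0, haN] at htel
  -- reindex the Icc sum as a range sum
  have himg : Finset.image (fun i : ℕ => -(n:ℤ) + i) (Finset.range N) =
      Finset.Icc (-(n:ℤ)) (K-1) := by
    ext k
    simp only [Finset.mem_image, Finset.mem_range, Finset.mem_Icc]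
    constructor
    · rintro ⟨i, hi, rfl⟩; omega
    · intro hk; exact ⟨(k + n).toNat, by omega, by omega⟩
  have hreix : ∀ g : ℤ → ℝ, ∑ k ∈ Finset.Icc (-(n:ℤ)) (K-1), g k =
      ∑ i ∈ Finset.range N, g (-(n:ℤ) + i) := by
    intro g
    rw [← himg, Finset.sum_image (fun x _ y _ h => by omega)]
  have hcast : ∀ i : ℕ, ((-(n:ℤ) + (i:ℤ) : ℤ) : ℝ) = -(n:ℝ) + i := by
    intro i; push_cast; ring
  have hsum_abs : ∑ k ∈ Finset.Icc (-(n:ℤ)) (K-1),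
      (∫ x in ((k:ℝ)/(n:ℝ))..(((k:ℝ)+1)/(n:ℝ)), |F₂' x|) =
      ∫ x in (-1:ℝ)..((K:ℝ)/n), |F₂' x| := by
    rw [hreix (fun k => ∫ x in ((k:ℝ)/(n:ℝ))..(((k:ℝ)+1)/(n:ℝ)), |F₂' x|)]
    rw [← htel]
    refine Finset.sum_congr rfl fun i _ => ?_
    have e1 : ((-(n:ℤ) + (i:ℤ) : ℤ):ℝ)/(n:ℝ) = a i := by
      simp only [hadef]; push_cast; ring
    have e2 : (((-(n:ℤ) + (i:ℤ) : ℤ):ℝ)+1)/(n:ℝ) = a (i+1) := by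
      simp only [hadef]; push_cast; ring
    rw [e1, e2]
  -- combine
  have hjoin : (∫ x in (-1:ℝ)..((K:ℝ)/n), |F₂' x|) + ∫ x in ((K:ℝ)/n)..(1-δ), |F₂' x| =
      ∫ x in (-1:ℝ)..(1-δ), |F₂' x| := by
    apply intervalIntegral.integral_add_adjacent_intervals
    · exact (hIsub _ _ le_rfl (by linarith [div_nonneg hK0' (le_of_lt hn0)])
        hKn).abs
    · exact (hIsub _ _ (by linarith [div_nonneg hK0' (le_of_lt hn0)]) hKn le_rfl).abs
  have hBV' := hBV (1-δ) ⟨le_rfl, by linarith⟩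
  have habs_nonneg : ∀ b c : ℝ, (0:ℝ) ≤ 0 := fun _ _ => le_rfl
  calc -(1/(n : ℝ)) * (F₂ (1 - δ) + C)
      ≤ -(1/(n:ℝ)) * ∫ x in (-1:ℝ)..(1-δ), |F₂' x| := by
        have h1n : (0:ℝ) < 1/n := by positivity
        nlinarith
    _ = (∑ k ∈ Finset.Icc (-(n:ℤ)) (K-1),
          -((1/(n:ℝ)) * ∫ x in ((k:ℝ)/(n:ℝ))..(((k:ℝ)+1)/(n:ℝ)), |F₂' x|)) +
        -((1/(n:ℝ)) * ∫ x in ((K:ℝ)/n)..(1-δ), |F₂' x|) := by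
        rw [← hjoin, ← hsum_abs, Finset.sum_neg_distrib, ← Finset.mul_sum]
        ring
    _ ≤ _ := add_le_add hsum hlast
end
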